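/- Let q ≥ 2, c ≥ 1, and d ≥ 3 be integers. Then: (i) ω_{q,c,d}(0) = 0; (ii) ω_{q,c,d}(1 − 1/q) = (1 − c/d)·ln q; (iii) if q ≥ 3 or d is even, ω_{q,c,d}(1) = ln(q−1) + (c/d)·ρ_{q,d}(1) − (c/d)·ln q; (iv) if q = 2 and d is odd, then ω_{2,c,d}(1 − 1/d) = (1 − c)·H₂(1/d) + (c/d)·ln d, and ω_{2,c,d}(x) = −∞ for every x ∈ (1 − 1/d, 1). -/

import Mathlib

open Real Set Filter Polynomial
open scoped Classical
open Finset Topology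

/-- The entropy function `H_q`. -/
noncomputable def Hent (q : ℕ) (x : ℝ) : ℝ :=
  x * Real.log (1 / x) + (1 - x) * Real.log (1 / (1 - x)) + x * Real.log ((q : ℝ) - 1)

/-- The information divergence function `D(x‖y)`. -/
noncomputable def Dkl (x y : ℝ) : ℝ :=
  x * Real.log (x / y) + (1 - x) * Real.log ((1 - x) / (1 - y))

/-- The function `ρ_{q,d}`. -/
noncomputable def rhoF (q d : ℕ) (x : ℝ) : ℝ :=
  Real.log (1 + ((q : ℝ) - 1) * (1 - (q : ℝ) * x / ((q : ℝ) - 1)) ^ d)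

/-- The function `δ_{q,d}(x, x̂)`. -/
noncomputable def deltaTwo (q d : ℕ) (x xh : ℝ) : ℝ :=
  (d : ℝ) * Dkl x xh + rhoF q d xh

/-- The function `δ_{q,d}(x) = inf_{x̂ ∈ (0,1)} δ_{q,d}(x, x̂)`. -/
noncomputable def deltaMin (q d : ℕ) (x : ℝ) : ℝ :=
  sInf ((fun xh => deltaTwo q d x xh) '' Set.Ioo 0 1)

/-- The asymptotic growth rate `ω_{q,c,d}`. -/
noncomputable def omegaF (q c d : ℕ) (x : ℝ) : ℝ :=
  Hent q x + ((c : ℝ) / (d : ℝ)) * (deltaMin q d x - Real.log (q : ℝ))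


noncomputable def aCoef (q k : ℕ) : ℝ := 1 + (-1)^k * ((q:ℝ)-1) / ((q:ℝ)-1)^k

lemma qcast {q : ℕ} (hq : 2 ≤ q) : (2:ℝ) ≤ (q:ℝ) := by exact_mod_cast hq

lemma aCoef_nonneg {q : ℕ} (hq : 2 ≤ q) (k : ℕ) : 0 ≤ aCoef q k := by
  have h2 := qcast hq
  have h1 : (1:ℝ) ≤ (q:ℝ) - 1 := by linarith
  have hpos : (0:ℝ) < ((q:ℝ)-1)^k := by positivity
  rcases Nat.even_or_odd k with hk | hk
  · rw [aCoef, hk.neg_one_pow, one_mul]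
    have : 0 ≤ ((q:ℝ)-1) / ((q:ℝ)-1)^k := by positivity
    linarith
  · rw [aCoef, hk.neg_one_pow, neg_one_mul, neg_div]
    have hle : ((q:ℝ)-1) ≤ ((q:ℝ)-1)^k := by
      calc ((q:ℝ)-1) = ((q:ℝ)-1)^1 := (pow_one _).symm
      _ ≤ ((q:ℝ)-1)^k := pow_le_pow_right₀ h1 hk.pos
    have : ((q:ℝ)-1) / ((q:ℝ)-1)^k ≤ 1 := (div_le_one hpos).mpr hle
    linarith

lemma expand_key {q : ℕ} (hq : 2 ≤ q) (d : ℕ) (p : ℝ) :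
    1 + ((q:ℝ)-1) * (1 - (q:ℝ)*p/((q:ℝ)-1))^d
    = ∑ k ∈ Finset.range (d+1), (d.choose k : ℝ) * p^k * (1-p)^(d-k) * aCoef q k := by
  have h2 := qcast hq
  have hQ : ((q:ℝ)-1) ≠ 0 := by linarith
  have e0 : 1 - (q:ℝ)*p/((q:ℝ)-1) = (-(p/((q:ℝ)-1))) + (1-p) := by field_simp; ring
  calc 1 + ((q:ℝ)-1) * (1 - (q:ℝ)*p/((q:ℝ)-1))^d
      = (p + (1-p))^d + ((q:ℝ)-1) * ((-(p/((q:ℝ)-1))) + (1-p))^d := by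
        rw [e0, show p + (1-p) = (1:ℝ) by ring, one_pow]
    _ = ∑ k ∈ Finset.range (d+1), (p^k * (1-p)^(d-k) * (d.choose k:ℝ)
          + ((q:ℝ)-1) * ((-(p/((q:ℝ)-1)))^k * (1-p)^(d-k) * (d.choose k:ℝ))) := by
        rw [add_pow, add_pow, Finset.mul_sum, Finset.sum_add_distrib]
    _ = ∑ k ∈ Finset.range (d+1), (d.choose k : ℝ) * p^k * (1-p)^(d-k) * aCoef q k := by
        refine Finset.sum_congr rfl fun k hk => ?_
        have hQk : ((q:ℝ)-1)^k ≠ 0 := pow_ne_zero _ hQ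
        rw [aCoef, neg_pow, div_pow]
        field_simp






lemma key_term_le {q : ℕ} (hq : 2 ≤ q) (d : ℕ) {p : ℝ} (hp0 : 0 ≤ p) (hp1 : p ≤ 1)
    {k : ℕ} (hk : k ≤ d) :
    (d.choose k : ℝ) * p^k * (1-p)^(d-k) * aCoef q k
      ≤ 1 + ((q:ℝ)-1) * (1 - (q:ℝ)*p/((q:ℝ)-1))^d := by
  rw [expand_key hq]
  refine Finset.single_le_sum (f := fun j => (d.choose j : ℝ) * p^j * (1-p)^(d-j) * aCoef q j)
    (fun j _ => ?_) (Finset.mem_range.mpr (Nat.lt_succ_of_le hk))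
  have h1p : (0:ℝ) ≤ 1 - p := by linarith
  have := aCoef_nonneg hq j
  positivity

-- Σ_{k ≤ n} k C(n,k) z^k = n z (1+z)^{n-1}
lemma sum_k_choose {n : ℕ} (hn : 1 ≤ n) (z : ℝ) :
    ∑ k ∈ Finset.range (n+1), (k:ℝ) * (n.choose k : ℝ) * z^k
      = (n:ℝ) * z * (z+1)^(n-1) := by
  rw [Finset.sum_range_succ']
  simp only [Nat.cast_zero, zero_mul, pow_zero, add_zero]
  have hid : ∀ j : ℕ, ((j+1:ℕ):ℝ) * (n.choose (j+1) : ℝ) = (n:ℝ) * ((n-1).choose j : ℝ) := by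
    intro j
    have : (j+1) * n.choose (j+1) = n * (n-1).choose j := by
      have h := Nat.add_one_mul_choose_eq (n-1) j
      have hs : n - 1 + 1 = n := by omega
      rw [hs] at h
      simpa [Nat.succ_eq_add_one, mul_comm] using h.symm
    exact_mod_cast congrArg (Nat.cast : ℕ → ℝ) this
  have : ∀ j ∈ Finset.range n, ((j+1:ℕ):ℝ) * (n.choose (j+1) : ℝ) * z^(j+1)
      = (n:ℝ) * z * (((n-1).choose j : ℝ) * z^j) := by
    intro j _
    rw [hid j, pow_succ]
    ring
  rw [Finset.sum_congr rfl this, ← Finset.mul_sum]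
  congr 1
  have := add_pow z 1 (n-1)
  simp only [one_pow, mul_one] at this
  rw [show n = (n-1)+1 by omega] at *
  simp only [Nat.add_sub_cancel] at *
  rw [this]
  exact Finset.sum_congr rfl fun k _ => by ring

-- the tilted weights
noncomputable def wt (q d k : ℕ) : ℝ := (d.choose k : ℝ) * aCoef q k * ((q:ℝ)-1)^k

lemma wt_nonneg {q : ℕ} (hq : 2 ≤ q) (d k : ℕ) : 0 ≤ wt q d k := by
  have h2 := qcast hq
  have ha := aCoef_nonneg hq k
  have hp : (0:ℝ) ≤ ((q:ℝ)-1)^k := pow_nonneg (by linarith) _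
  exact mul_nonneg (mul_nonneg (by positivity) ha) hp

lemma wt_sum {q : ℕ} (hq : 2 ≤ q) {d : ℕ} (hd : 1 ≤ d) :
    ∑ k ∈ Finset.range (d+1), wt q d k = (q:ℝ)^d := by
  have h2 := qcast hq
  have hQ : ((q:ℝ)-1) ≠ 0 := by linarith
  have e1 : ∀ k ∈ Finset.range (d+1), wt q d k
      = ((q:ℝ)-1)^k * 1^(d-k) * (d.choose k : ℝ) + ((q:ℝ)-1) * ((-1:ℝ)^k * 1^(d-k) * (d.choose k:ℝ)) := by
    intro k _
    have hQk : ((q:ℝ)-1)^k ≠ 0 := pow_ne_zero _ hQ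
    rw [wt, aCoef]
    field_simp
    ring
  rw [Finset.sum_congr rfl e1, Finset.sum_add_distrib, ← add_pow, ← Finset.mul_sum, ← add_pow]
  rw [show ((q:ℝ)-1)+1 = (q:ℝ) by ring, show (-1:ℝ)+1 = 0 by ring, zero_pow (by omega)]
  ring

lemma wt_sum_k {q : ℕ} (hq : 2 ≤ q) {d : ℕ} (hd : 2 ≤ d) :
    ∑ k ∈ Finset.range (d+1), (k:ℝ) * wt q d k = (d:ℝ) * ((q:ℝ)-1) * (q:ℝ)^(d-1) := by
  have h2 := qcast hq
  have hQ : ((q:ℝ)-1) ≠ 0 := by linarith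
  have e1 : ∀ k ∈ Finset.range (d+1), (k:ℝ) * wt q d k
      = (k:ℝ) * (d.choose k : ℝ) * ((q:ℝ)-1)^k + ((q:ℝ)-1) * ((k:ℝ) * (d.choose k:ℝ) * (-1:ℝ)^k) := by
    intro k _
    have hQk : ((q:ℝ)-1)^k ≠ 0 := pow_ne_zero _ hQ
    rw [wt, aCoef]
    field_simp
  rw [Finset.sum_congr rfl e1, Finset.sum_add_distrib, sum_k_choose (by omega), ← Finset.mul_sum,
    sum_k_choose (by omega), show (-1:ℝ)+1 = 0 by ring, zero_pow (by omega)]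
  rw [show ((q:ℝ)-1)+1 = (q:ℝ) by ring]
  ring

lemma jensen_pow (d : ℕ) (w : ℕ → ℝ) (hw : ∀ k, 0 ≤ w k) {W B s : ℝ}
    (hW : ∑ k ∈ Finset.range (d+1), w k = W) (hWpos : 0 < W)
    (hB : ∑ k ∈ Finset.range (d+1), (k:ℝ) * w k = B) (hs : 0 < s) :
    W * s ^ (B/W : ℝ) ≤ ∑ k ∈ Finset.range (d+1), w k * s^k := by
  have key := Real.geom_mean_le_arith_mean_weighted (Finset.range (d+1))
    (fun k => w k / W) (fun k => s^k)
    (fun k _ => div_nonneg (hw k) hWpos.le)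
    (by rw [← Finset.sum_div, hW, div_self hWpos.ne'])
    (fun k _ => pow_nonneg hs.le k)
  have hprod : ∏ k ∈ Finset.range (d+1), (s^k : ℝ) ^ (w k / W : ℝ)
      = s ^ (B/W : ℝ) := by
    have e1 : ∀ k ∈ Finset.range (d+1), (s^k : ℝ) ^ (w k / W : ℝ)
        = Real.exp (Real.log s * ((k:ℝ) * w k / W)) := by
      intro k _
      rw [← Real.rpow_natCast s k, ← Real.rpow_mul hs.le,
        Real.rpow_def_of_pos hs]
      ring_nf
    rw [Finset.prod_congr rfl e1, ← Real.exp_sum, ← Finset.mul_sum,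
      Real.rpow_def_of_pos hs]
    rw [← Finset.sum_div, hB]
  have hsum : ∑ k ∈ Finset.range (d+1), (w k / W) * s^k
      = (∑ k ∈ Finset.range (d+1), w k * s^k) / W := by
    rw [Finset.sum_div]
    exact Finset.sum_congr rfl fun k _ => by ring
  rw [hprod, hsum] at key
  calc W * s ^ (B/W : ℝ) ≤ W * ((∑ k ∈ Finset.range (d+1), w k * s^k) / W) := by
        exact mul_le_mul_of_nonneg_left key hWpos.le
    _ = ∑ k ∈ Finset.range (d+1), w k * s^k := by field_simp


lemma sInf_char {f : ℝ → ℝ} {L : ℝ}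
    (hlb : ∀ p ∈ Set.Ioo (0:ℝ) 1, L ≤ f p)
    {l : Filter ℝ} [l.NeBot]
    (hmem : ∀ᶠ p in l, p ∈ Set.Ioo (0:ℝ) 1)
    (htend : Tendsto f l (𝓝 L)) :
    sInf (f '' Set.Ioo 0 1) = L := by
  have hbdd : BddBelow (f '' Set.Ioo 0 1) := by
    refine ⟨L, ?_⟩
    rintro y ⟨p, hp, rfl⟩
    exact hlb p hp
  have hne : (f '' Set.Ioo 0 1).Nonempty := by
    obtain ⟨p, hp⟩ := hmem.exists
    exact ⟨f p, p, hp, rfl⟩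
  refine le_antisymm (le_of_forall_pos_le_add fun ε hε => ?_)
    (le_csInf hne (by rintro y ⟨p, hp, rfl⟩; exact hlb p hp))
  have hev : ∀ᶠ p in l, f p < L + ε :=
    htend.eventually_lt_const (by linarith)
  obtain ⟨p, hp, hlt⟩ := (hmem.and hev).exists
  exact (csInf_le hbdd ⟨p, hp, rfl⟩).trans hlt.le

lemma Dkl_zero (p : ℝ) : Dkl 0 p = - Real.log (1 - p) := by
  simp [Dkl]

lemma Dkl_one (p : ℝ) : Dkl 1 p = - Real.log p := by
  simp [Dkl]

lemma rho_arg_continuous (q d : ℕ) :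
    Continuous (fun p : ℝ => 1 + ((q:ℝ)-1)*(1-(q:ℝ)*p/((q:ℝ)-1))^d) := by
  fun_prop

lemma deltaMin_zero {q d : ℕ} (hq : 2 ≤ q) (hd : 1 ≤ d) :
    deltaMin q d 0 = Real.log q := by
  have h2 := qcast hq
  have hQ0 : (0:ℝ) < q := by linarith
  have hlb : ∀ p ∈ Set.Ioo (0:ℝ) 1, Real.log q ≤ deltaTwo q d 0 p := by
    intro p hp
    obtain ⟨hp0, hp1⟩ := hp
    have h1p : (0:ℝ) < 1 - p := by linarith
    have key := key_term_le hq d hp0.le hp1.le (Nat.zero_le d)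
    have keq : (d.choose 0 : ℝ) * p^0 * (1-p)^(d-0) * aCoef q 0 = (q:ℝ)*(1-p)^d := by
      simp [aCoef]; ring
    rw [keq] at key
    have hlog := Real.log_le_log (by positivity) key
    rw [Real.log_mul (by positivity) (by positivity), Real.log_pow] at hlog
    rw [deltaTwo, Dkl_zero, rhoF]
    linarith
  have harg : 1 + ((q:ℝ)-1)*(1-(q:ℝ)*(0:ℝ)/((q:ℝ)-1))^d = (q:ℝ) := by
    simp
  have htend : Tendsto (fun p => deltaTwo q d 0 p) (𝓝[>] (0:ℝ)) (𝓝 (Real.log q)) := by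
    have hfe : (fun p => deltaTwo q d 0 p)
        = fun p => -(d:ℝ) * Real.log (1-p) + Real.log (1 + ((q:ℝ)-1)*(1-(q:ℝ)*p/((q:ℝ)-1))^d) := by
      funext p
      rw [deltaTwo, Dkl_zero, rhoF]
      ring
    rw [hfe]
    have hc : ContinuousAt (fun p : ℝ => -(d:ℝ) * Real.log (1-p)
        + Real.log (1 + ((q:ℝ)-1)*(1-(q:ℝ)*p/((q:ℝ)-1))^d)) 0 := by
      apply ContinuousAt.add
      · have hcomp : ContinuousAt (fun p : ℝ => Real.log (1-p)) 0 :=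
          (Real.continuousAt_log (by norm_num)).comp
            ((continuous_const.sub continuous_id).continuousAt)
        exact continuousAt_const.mul hcomp
      · exact (Real.continuousAt_log (by rw [harg]; positivity)).comp
          (rho_arg_continuous q d).continuousAt
    have h0 : -(d:ℝ) * Real.log (1-(0:ℝ))
        + Real.log (1 + ((q:ℝ)-1)*(1-(q:ℝ)*(0:ℝ)/((q:ℝ)-1))^d) = Real.log q := by
      norm_num
    have := hc.tendsto.mono_left (nhdsWithin_le_nhds (s := Set.Ioi (0:ℝ)))
    simpa [h0] using this
  have hmem : ∀ᶠ p in 𝓝[>] (0:ℝ), p ∈ Set.Ioo (0:ℝ) 1 :=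
    Ioo_mem_nhdsGT_of_mem ⟨le_refl _, by norm_num⟩
  exact sInf_char hlb hmem htend

lemma rhoF_one {q : ℕ} (hq : 2 ≤ q) (d : ℕ) : rhoF q d 1 = Real.log (aCoef q d) := by
  have h2 := qcast hq
  have hQ : ((q:ℝ)-1) ≠ 0 := by linarith
  have e0 : 1 - (q:ℝ)*1/((q:ℝ)-1) = -(1/((q:ℝ)-1)) := by field_simp; ring
  rw [rhoF, e0]
  congr 1
  rw [neg_pow, aCoef]
  have hQk : ((q:ℝ)-1)^d ≠ 0 := pow_ne_zero _ hQ
  rw [div_pow, one_pow]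
  field_simp

lemma aCoef_d_pos {q d : ℕ} (hq : 2 ≤ q) (hd : 2 ≤ d) (h : 3 ≤ q ∨ Even d) :
    0 < aCoef q d := by
  have h2 := qcast hq
  have h1 : (1:ℝ) ≤ (q:ℝ) - 1 := by linarith
  have hpos : (0:ℝ) < ((q:ℝ)-1)^d := by positivity
  rcases Nat.even_or_odd d with hdev | hdodd
  · rw [aCoef, hdev.neg_one_pow, one_mul]
    have : 0 ≤ ((q:ℝ)-1) / ((q:ℝ)-1)^d := by positivity
    linarith
  · rcases h with hq3 | hdev
    · have h3 : (3:ℝ) ≤ (q:ℝ) := by exact_mod_cast hq3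
      rw [aCoef, hdodd.neg_one_pow, neg_one_mul, neg_div]
      have hlt : ((q:ℝ)-1) < ((q:ℝ)-1)^d := by
        calc ((q:ℝ)-1) = ((q:ℝ)-1)^1 := (pow_one _).symm
        _ < ((q:ℝ)-1)^d := pow_lt_pow_right₀ (by linarith) (by omega)
      have : ((q:ℝ)-1) / ((q:ℝ)-1)^d < 1 := (div_lt_one hpos).mpr hlt
      linarith
    · exact absurd hdev (Nat.not_even_iff_odd.mpr hdodd)

lemma deltaMin_one {q d : ℕ} (hq : 2 ≤ q) (hd : 2 ≤ d) (h3 : 3 ≤ q ∨ Even d) :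
    deltaMin q d 1 = rhoF q d 1 := by
  have h2 := qcast hq
  have hA := aCoef_d_pos hq hd h3
  rw [rhoF_one hq d]
  have hlb : ∀ p ∈ Set.Ioo (0:ℝ) 1, Real.log (aCoef q d) ≤ deltaTwo q d 1 p := by
    intro p hp
    obtain ⟨hp0, hp1⟩ := hp
    have key := key_term_le hq d hp0.le hp1.le (le_refl d)
    have keq : (d.choose d : ℝ) * p^d * (1-p)^(d-d) * aCoef q d = p^d * aCoef q d := by
      simp
    rw [keq] at key
    have hlog := Real.log_le_log (by positivity) key
    rw [Real.log_mul (by positivity) hA.ne', Real.log_pow] at hlog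
    rw [deltaTwo, Dkl_one, rhoF]
    linarith
  have harg : 1 + ((q:ℝ)-1)*(1-(q:ℝ)*(1:ℝ)/((q:ℝ)-1))^d = aCoef q d := by
    have hQ : ((q:ℝ)-1) ≠ 0 := by linarith
    have e0 : 1 - (q:ℝ)*1/((q:ℝ)-1) = -(1/((q:ℝ)-1)) := by field_simp; ring
    rw [e0, neg_pow, aCoef]
    have hQk : ((q:ℝ)-1)^d ≠ 0 := pow_ne_zero _ hQ
    rw [div_pow, one_pow]
    field_simp
  have harg' : 1 + ((q:ℝ)-1)*(1-(q:ℝ)/((q:ℝ)-1))^d = aCoef q d := by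
    rw [← harg]; norm_num
  have htend : Tendsto (fun p => deltaTwo q d 1 p) (𝓝[<] (1:ℝ)) (𝓝 (Real.log (aCoef q d))) := by
    have hfe : (fun p => deltaTwo q d 1 p)
        = fun p => -(d:ℝ) * Real.log p + Real.log (1 + ((q:ℝ)-1)*(1-(q:ℝ)*p/((q:ℝ)-1))^d) := by
      funext p
      rw [deltaTwo, Dkl_one, rhoF]
      ring
    rw [hfe]
    have hc : ContinuousAt (fun p : ℝ => -(d:ℝ) * Real.log p
        + Real.log (1 + ((q:ℝ)-1)*(1-(q:ℝ)*p/((q:ℝ)-1))^d)) 1 := by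
      apply ContinuousAt.add
      · exact continuousAt_const.mul (Real.continuousAt_log (by norm_num))
      · exact (Real.continuousAt_log (by rw [harg]; positivity)).comp
          (rho_arg_continuous q d).continuousAt
    have h0 : -(d:ℝ) * Real.log (1:ℝ)
        + Real.log (1 + ((q:ℝ)-1)*(1-(q:ℝ)*(1:ℝ)/((q:ℝ)-1))^d) = Real.log (aCoef q d) := by
      rw [harg, Real.log_one]
      ring
    have := hc.tendsto.mono_left (nhdsWithin_le_nhds (s := Set.Iio (1:ℝ)))
    simpa [harg'] using this
  have hmem : ∀ᶠ p in 𝓝[<] (1:ℝ), p ∈ Set.Ioo (0:ℝ) 1 :=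
    Ioo_mem_nhdsLT_of_mem ⟨by norm_num, le_refl _⟩
  exact sInf_char hlb hmem htend

lemma deltaTwo_sym_nonneg {q d : ℕ} (hq : 2 ≤ q) (hd : 2 ≤ d) {p : ℝ}
    (hp : p ∈ Set.Ioo (0:ℝ) 1) : 0 ≤ deltaTwo q d (1 - 1/(q:ℝ)) p := by
  have h2 := qcast hq
  obtain ⟨hp0, hp1⟩ := hp
  have h1p : (0:ℝ) < 1 - p := by linarith
  have hQ1 : (0:ℝ) < (q:ℝ) - 1 := by linarith
  have hQ0 : (0:ℝ) < (q:ℝ) := by linarith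
  set s : ℝ := p / (((q:ℝ)-1) * (1-p)) with hs_def
  have hs : 0 < s := by positivity
  -- A = (1-p)^d * Σ wt * s^k
  have hA : 1 + ((q:ℝ)-1)*(1-(q:ℝ)*p/((q:ℝ)-1))^d
      = (1-p)^d * ∑ k ∈ Finset.range (d+1), wt q d k * s^k := by
    rw [expand_key hq, Finset.mul_sum]
    refine Finset.sum_congr rfl fun k hk => ?_
    have hkd : k ≤ d := Nat.lt_succ_iff.mp (Finset.mem_range.mp hk)
    have hpow : (1-p)^(d-k) * (1-p)^k = (1-p)^d := by rw [← pow_add, Nat.sub_add_cancel hkd]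
    rw [wt, hs_def, div_pow, mul_pow, ← hpow]
    field_simp
  have hqd : (q:ℝ)^d = (q:ℝ)^(d-1) * q := by
    rw [← pow_succ]
    congr 1
    omega
  have hBW : (d:ℝ)*((q:ℝ)-1)*(q:ℝ)^(d-1) / (q:ℝ)^d = (d:ℝ)*((q:ℝ)-1)/(q:ℝ) := by
    rw [hqd]
    have : ((q:ℝ)^(d-1)) ≠ 0 := by positivity
    field_simp
  have hjen := jensen_pow d (wt q d) (wt_nonneg hq d) (wt_sum hq (by omega))
    (by positivity) (wt_sum_k hq hd) hs
  rw [hBW] at hjen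
  set r : ℝ := (d:ℝ)*((q:ℝ)-1)/(q:ℝ) with hr_def
  -- lower bound for A
  have hAge : (1-p)^d * ((q:ℝ)^d * s ^ (r:ℝ)) ≤ 1 + ((q:ℝ)-1)*(1-(q:ℝ)*p/((q:ℝ)-1))^d := by
    rw [hA]
    exact mul_le_mul_of_nonneg_left hjen (by positivity)
  have hApos : (0:ℝ) < 1 + ((q:ℝ)-1)*(1-(q:ℝ)*p/((q:ℝ)-1))^d := by
    refine lt_of_lt_of_le ?_ hAge
    have : (0:ℝ) < s ^ (r:ℝ) := Real.rpow_pos_of_pos hs _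
    positivity
  have hsr : (0:ℝ) < s ^ (r:ℝ) := Real.rpow_pos_of_pos hs _
  have hlogA : (d:ℝ)*Real.log (1-p) + (d:ℝ)*Real.log q + r * Real.log s
      ≤ Real.log (1 + ((q:ℝ)-1)*(1-(q:ℝ)*p/((q:ℝ)-1))^d) := by
    have := Real.log_le_log (by positivity) hAge
    rw [Real.log_mul (by positivity) (by positivity),
      Real.log_mul (by positivity) hsr.ne', Real.log_pow, Real.log_pow,
      Real.log_rpow hs] at this
    linarith
  have hlogs : Real.log s = Real.log p - Real.log ((q:ℝ)-1) - Real.log (1-p) := by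
    rw [hs_def, Real.log_div hp0.ne' (by positivity), Real.log_mul hQ1.ne' h1p.ne']
    ring
  have hx : (1:ℝ) - 1/(q:ℝ) = ((q:ℝ)-1)/(q:ℝ) := by field_simp
  have hlog1 : Real.log ((1 - 1/(q:ℝ))/p) = Real.log ((q:ℝ)-1) - Real.log q - Real.log p := by
    rw [hx, div_div, Real.log_div hQ1.ne' (by positivity), Real.log_mul hQ0.ne' hp0.ne']
    ring
  have hlog2 : Real.log ((1 - (1 - 1/(q:ℝ)))/(1-p)) = -Real.log q - Real.log (1-p) := by
    rw [show (1 - (1 - 1/(q:ℝ))) = 1/(q:ℝ) by ring, div_div,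
      Real.log_div one_ne_zero (by positivity), Real.log_mul hQ0.ne' h1p.ne', Real.log_one]
    ring
  have hDkl : (d:ℝ) * Dkl (1 - 1/(q:ℝ)) p
      = -((d:ℝ)*Real.log (1-p) + (d:ℝ)*Real.log q
          + r * (Real.log p - Real.log ((q:ℝ)-1) - Real.log (1-p))) := by
    rw [Dkl, hlog1, hlog2, hr_def]
    field_simp
    ring
  rw [deltaTwo, rhoF, hDkl]
  rw [hlogs] at hlogA
  linarith

lemma deltaMin_sym {q d : ℕ} (hq : 2 ≤ q) (hd : 2 ≤ d) :
    deltaMin q d (1 - 1/(q:ℝ)) = 0 := by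
  have h2 := qcast hq
  have hQ0 : (0:ℝ) < q := by linarith
  have hx0 : (0:ℝ) < 1 - 1/(q:ℝ) := by
    have : 1/(q:ℝ) ≤ 1/2 := by
      apply one_div_le_one_div_of_le <;> linarith
    linarith
  have hx1 : 1 - 1/(q:ℝ) < 1 := by
    have : 0 < 1/(q:ℝ) := by positivity
    linarith
  have hmemx : (1 - 1/(q:ℝ)) ∈ Set.Ioo (0:ℝ) 1 := ⟨hx0, hx1⟩
  have hval : deltaTwo q d (1 - 1/(q:ℝ)) (1 - 1/(q:ℝ)) = 0 := by
    have h1 : Dkl (1 - 1/(q:ℝ)) (1 - 1/(q:ℝ)) = 0 := by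
      rw [Dkl, div_self hx0.ne', div_self (by linarith : (1:ℝ) - (1 - 1/(q:ℝ)) ≠ 0)]
      simp
    have h2' : rhoF q d (1 - 1/(q:ℝ)) = 0 := by
      have harg : 1 - (q:ℝ)*(1 - 1/(q:ℝ))/((q:ℝ)-1) = 0 := by
        have hQ1 : ((q:ℝ)-1) ≠ 0 := by linarith
        field_simp
        norm_num
      rw [rhoF, harg, zero_pow (by omega), mul_zero, add_zero, Real.log_one]
    rw [deltaTwo, h1, h2', mul_zero, add_zero]
  have htend : Tendsto (fun p => deltaTwo q d (1 - 1/(q:ℝ)) p)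
      (pure (1 - 1/(q:ℝ)) : Filter ℝ) (𝓝 0) := by
    rw [← hval]
    exact tendsto_pure_nhds _ _
  have hmem : ∀ᶠ p in (pure (1 - 1/(q:ℝ)) : Filter ℝ), p ∈ Set.Ioo (0:ℝ) 1 := by
    rw [eventually_pure]
    exact hmemx
  exact sInf_char (fun p hp => deltaTwo_sym_nonneg hq hd hp) hmem htend

lemma dcast {d : ℕ} (hd : 3 ≤ d) : (3:ℝ) ≤ (d:ℝ) := by exact_mod_cast hd

lemma geom_pos {d : ℕ} (hd : 3 ≤ d) {p : ℝ} (hp : 1/2 < p) :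
    0 < ∑ j ∈ Finset.range d, (2*p-1)^j := by
  refine Finset.sum_pos (fun j _ => pow_pos (by linarith) j) ?_
  exact Finset.nonempty_range_iff.mpr (by omega)

lemma two_cast : (((2:ℕ)):ℝ) = 2 := by norm_num

lemma hAeq2 {d : ℕ} (hodd : Odd d) (p : ℝ) :
    1 + (((2:ℕ):ℝ)-1)*(1 - ((2:ℕ):ℝ)*p/(((2:ℕ):ℝ)-1))^d
      = 2*(1-p) * ∑ j ∈ Finset.range d, (2*p-1)^j := by
  rw [two_cast]
  have h1 : (1 - 2*p/(2-1) : ℝ) = -(2*p-1) := by norm_num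
  rw [h1, hodd.neg_pow]
  have := geom_sum_mul (2*p-1) d
  linear_combination this

lemma deltaMin_iv {d : ℕ} (hd : 3 ≤ d) (hodd : Odd d) :
    deltaMin 2 d (1 - 1/(d:ℝ))
      = Real.log 2 + ((d:ℝ)-1) * Real.log (1 - 1/(d:ℝ)) := by
  have hD := dcast hd
  have hD0 : (0:ℝ) < d := by linarith
  have hx0 : (0:ℝ) < 1 - 1/(d:ℝ) := by
    have : 1/(d:ℝ) ≤ 1/3 := by apply one_div_le_one_div_of_le <;> linarith
    linarith
  have hx1 : 1 - 1/(d:ℝ) < 1 := by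
    have : 0 < 1/(d:ℝ) := by positivity
    linarith
  have h1x : (1:ℝ) - (1 - 1/(d:ℝ)) = 1/(d:ℝ) := by ring
  have hdev : Even (d - 1) := Nat.Odd.sub_odd hodd odd_one
  have hch : (d.choose (d-1) : ℝ) = (d:ℝ) := by
    have : d.choose (d-1) = d := by
      rw [Nat.choose_symm (by omega : 1 ≤ d), Nat.choose_one_right]
    exact_mod_cast this
  have ha2 : aCoef 2 (d-1) = 2 := by
    rw [aCoef, two_cast, hdev.neg_one_pow]
    norm_num
  have hcast1 : ((d-1:ℕ):ℝ) = (d:ℝ)-1 := by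
    rw [Nat.cast_sub (by omega)]; norm_num
  -- lower bound
  have hlb : ∀ p ∈ Set.Ioo (0:ℝ) 1,
      Real.log 2 + ((d:ℝ)-1) * Real.log (1 - 1/(d:ℝ)) ≤ deltaTwo 2 d (1 - 1/(d:ℝ)) p := by
    intro p hp
    obtain ⟨hp0, hp1⟩ := hp
    have h1p : (0:ℝ) < 1 - p := by linarith
    have key := key_term_le (le_refl 2) d hp0.le hp1.le (by omega : d - 1 ≤ d)
    have keq : ((d.choose (d-1)) : ℝ) * p^(d-1) * (1-p)^(d-(d-1)) * aCoef 2 (d-1)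
        = 2*(d:ℝ)*p^(d-1)*(1-p) := by
      rw [hch, ha2, show d-(d-1) = 1 by omega, pow_one]
      ring
    rw [keq] at key
    have hlog := Real.log_le_log (by positivity) key
    rw [Real.log_mul (by positivity) h1p.ne', Real.log_mul (by positivity) (by positivity),
      Real.log_mul (by norm_num) hD0.ne', Real.log_pow] at hlog
    rw [hcast1] at hlog
    -- hlog : log 2 + log d + (d-1)*log p + log (1-p) ≤ log A
    have hlog1 : Real.log ((1 - 1/(d:ℝ))/p) = Real.log (1 - 1/(d:ℝ)) - Real.log p :=
      Real.log_div hx0.ne' hp0.ne'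
    have hlog2 : Real.log ((1 - (1 - 1/(d:ℝ)))/(1-p)) = -Real.log d - Real.log (1-p) := by
      rw [h1x, div_div, Real.log_div one_ne_zero (by positivity),
        Real.log_mul hD0.ne' h1p.ne', Real.log_one]
      ring
    have hDkl : (d:ℝ) * Dkl (1 - 1/(d:ℝ)) p
        = ((d:ℝ)-1)*Real.log (1 - 1/(d:ℝ)) - (((d:ℝ)-1)*Real.log p)
          - Real.log d - Real.log (1-p) := by
      rw [Dkl, hlog1, hlog2]
      field_simp
      ring
    rw [deltaTwo, rhoF, hDkl]
    linarith
  -- limit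
  have hS1 : (∑ j ∈ Finset.range d, (2*(1:ℝ)-1)^j) = (d:ℝ) := by
    norm_num
  have hgc : ContinuousAt (fun p : ℝ => (d:ℝ)*(1 - 1/(d:ℝ)) * Real.log ((1 - 1/(d:ℝ))/p)
      + Real.log (2*(∑ j ∈ Finset.range d, (2*p-1)^j)/(d:ℝ))) 1 := by
    apply ContinuousAt.add
    · refine continuousAt_const.mul ((Real.continuousAt_log ?_).comp
        (continuousAt_const.div continuousAt_id one_ne_zero))
      show (1 - 1/(d:ℝ))/(1:ℝ) ≠ 0
      rw [div_one]
      exact hx0.ne'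
    · refine (Real.continuousAt_log ?_).comp ?_
      · show 2*(∑ j ∈ Finset.range d, (2*(1:ℝ)-1)^j)/(d:ℝ) ≠ 0
        rw [hS1]
        positivity
      · exact (((continuous_const.mul (continuous_finset_sum _ (fun j _ => by fun_prop))).div_const _)).continuousAt
  have hgval : (d:ℝ)*(1 - 1/(d:ℝ)) * Real.log ((1 - 1/(d:ℝ))/(1:ℝ))
      + Real.log (2*(∑ j ∈ Finset.range d, (2*(1:ℝ)-1)^j)/(d:ℝ))
      = Real.log 2 + ((d:ℝ)-1) * Real.log (1 - 1/(d:ℝ)) := by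
    rw [hS1, div_one, show 2*(d:ℝ)/(d:ℝ) = 2 by field_simp]
    have : (d:ℝ)*(1 - 1/(d:ℝ)) = (d:ℝ)-1 := by field_simp
    rw [this]
    ring
  have hev : ∀ᶠ p in 𝓝[<] (1:ℝ), deltaTwo 2 d (1 - 1/(d:ℝ)) p
      = (d:ℝ)*(1 - 1/(d:ℝ)) * Real.log ((1 - 1/(d:ℝ))/p)
        + Real.log (2*(∑ j ∈ Finset.range d, (2*p-1)^j)/(d:ℝ)) := by
    filter_upwards [Ioo_mem_nhdsLT_of_mem (⟨by norm_num, le_refl _⟩ :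
      (1:ℝ) ∈ Set.Ioc (1/2 : ℝ) 1)] with p hp
    obtain ⟨hp0, hp1⟩ := hp
    have h1p : (0:ℝ) < 1 - p := by linarith
    have hp0' : (0:ℝ) < p := by linarith
    have hS := geom_pos hd hp0
    have e1 : deltaTwo 2 d (1 - 1/(d:ℝ)) p
        = (d:ℝ)*(1 - 1/(d:ℝ)) * Real.log ((1 - 1/(d:ℝ))/p)
          + ((d:ℝ)*(1 - (1 - 1/(d:ℝ)))) * Real.log ((1 - (1 - 1/(d:ℝ)))/(1-p))
          + Real.log (2*(1-p) * ∑ j ∈ Finset.range d, (2*p-1)^j) := by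
      rw [deltaTwo, rhoF, hAeq2 hodd, Dkl]
      ring
    rw [e1, h1x, show (d:ℝ)*(1/(d:ℝ)) = 1 by field_simp, one_mul]
    have hcomb : Real.log ((1/(d:ℝ))/(1-p))
        + Real.log (2*(1-p) * ∑ j ∈ Finset.range d, (2*p-1)^j)
        = Real.log (2*(∑ j ∈ Finset.range d, (2*p-1)^j)/(d:ℝ)) := by
      rw [← Real.log_mul (by positivity) (by positivity)]
      congr 1
      field_simp
    rw [← hcomb]
    ring
  have htend : Tendsto (fun p => deltaTwo 2 d (1 - 1/(d:ℝ)) p) (𝓝[<] (1:ℝ))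
      (𝓝 (Real.log 2 + ((d:ℝ)-1) * Real.log (1 - 1/(d:ℝ)))) := by
    refine Tendsto.congr' (hev.mono fun p hp => hp.symm) ?_
    have := hgc.tendsto.mono_left (nhdsWithin_le_nhds (s := Set.Iio (1:ℝ)))
    rw [hgval] at this
    exact this
  have hmem : ∀ᶠ p in 𝓝[<] (1:ℝ), p ∈ Set.Ioo (0:ℝ) 1 :=
    Ioo_mem_nhdsLT_of_mem ⟨by norm_num, le_refl _⟩
  exact sInf_char hlb hmem htend

lemma deltaTwo_unbdd {d : ℕ} (hd : 3 ≤ d) (hodd : Odd d) {x : ℝ}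
    (hx : x ∈ Set.Ioo (1 - 1/(d:ℝ)) 1) :
    Tendsto (fun p => deltaTwo 2 d x p) (𝓝[<] (1:ℝ)) atBot := by
  have hD := dcast hd
  have hD0 : (0:ℝ) < d := by linarith
  obtain ⟨hxl, hx1⟩ := hx
  have hx0 : (0:ℝ) < x := by
    have : (1:ℝ)/(d:ℝ) ≤ 1/3 := by apply one_div_le_one_div_of_le <;> linarith
    linarith
  have h1x : (0:ℝ) < 1 - x := by linarith
  have hκ : (0:ℝ) < 1 - (d:ℝ)*(1-x) := by
    have : (d:ℝ)*(1-x) < (d:ℝ)*(1/(d:ℝ)) := by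
      apply mul_lt_mul_of_pos_left _ hD0
      linarith
    rw [mul_one_div, div_self hD0.ne'] at this
    linarith
  -- representation on Ioo (1/2) 1
  have hev : ∀ᶠ p in 𝓝[<] (1:ℝ), deltaTwo 2 d x p
      = ((d:ℝ)*x*Real.log (x/p) + (d:ℝ)*(1-x)*Real.log (1-x) + Real.log 2
          + Real.log (∑ j ∈ Finset.range d, (2*p-1)^j))
        + (1-(d:ℝ)*(1-x))*Real.log (1-p) := by
    filter_upwards [Ioo_mem_nhdsLT_of_mem (⟨by norm_num, le_refl _⟩ :
      (1:ℝ) ∈ Set.Ioc (1/2 : ℝ) 1)] with p hp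
    obtain ⟨hp0, hp1⟩ := hp
    have h1p : (0:ℝ) < 1 - p := by linarith
    have hp0' : (0:ℝ) < p := by linarith
    have hS := geom_pos hd hp0
    have e1 : deltaTwo 2 d x p
        = (d:ℝ)*x * Real.log (x/p) + ((d:ℝ)*(1-x)) * Real.log ((1-x)/(1-p))
          + Real.log (2*(1-p) * ∑ j ∈ Finset.range d, (2*p-1)^j) := by
      rw [deltaTwo, rhoF, hAeq2 hodd, Dkl]
      ring
    rw [e1, Real.log_div h1x.ne' h1p.ne',
      Real.log_mul (by positivity) hS.ne', Real.log_mul (by norm_num) h1p.ne']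
    ring
  refine Tendsto.congr' (hev.mono fun p hp => hp.symm) ?_
  apply Filter.Tendsto.add_atBot
  · -- continuous part
    have hc : ContinuousAt (fun p : ℝ => (d:ℝ)*x*Real.log (x/p)
        + (d:ℝ)*(1-x)*Real.log (1-x) + Real.log 2
        + Real.log (∑ j ∈ Finset.range d, (2*p-1)^j)) 1 := by
      apply ContinuousAt.add
      apply ContinuousAt.add
      apply ContinuousAt.add
      · refine continuousAt_const.mul ((Real.continuousAt_log ?_).comp
          (continuousAt_const.div continuousAt_id one_ne_zero))
        show x/(1:ℝ) ≠ 0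
        rw [div_one]
        exact hx0.ne'
      · exact continuousAt_const
      · exact continuousAt_const
      · refine (Real.continuousAt_log ?_).comp
          (continuous_finset_sum _ (fun j _ => by fun_prop)).continuousAt
        show (∑ j ∈ Finset.range d, (2*(1:ℝ)-1)^j) ≠ 0
        norm_num
        positivity
    exact hc.tendsto.mono_left (nhdsWithin_le_nhds (s := Set.Iio (1:ℝ)))
  · -- atBot part
    have hlog : Tendsto (fun p : ℝ => Real.log (1-p)) (𝓝[<] (1:ℝ)) atBot := by
      refine Real.tendsto_log_nhdsGT_zero.comp ?_
      rw [tendsto_nhdsWithin_iff]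
      constructor
      · have : Tendsto (fun p : ℝ => 1 - p) (𝓝 (1:ℝ)) (𝓝 ((1:ℝ) - 1)) :=
          (continuous_const.sub continuous_id).tendsto 1
        rw [sub_self] at this
        exact this.mono_left nhdsWithin_le_nhds
      · filter_upwards [self_mem_nhdsWithin] with p hp
        simp only [Set.mem_Iio] at hp
        exact Set.mem_Ioi.mpr (by linarith)
    exact hlog.const_mul_atBot hκ


lemma Hent_zero (q : ℕ) : Hent q 0 = 0 := by simp [Hent]

lemma Hent_one (q : ℕ) : Hent q 1 = Real.log ((q:ℝ)-1) := by simp [Hent]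

lemma Hent_sym {q : ℕ} (hq : 2 ≤ q) : Hent q (1 - 1/(q:ℝ)) = Real.log q := by
  have h2 := qcast hq
  have hQ0 : (0:ℝ) < q := by linarith
  have hQ1 : (0:ℝ) < (q:ℝ)-1 := by linarith
  rw [Hent, show (1:ℝ) - (1 - 1/(q:ℝ)) = 1/(q:ℝ) by ring, one_div_one_div]
  rw [show (1:ℝ) - 1/(q:ℝ) = ((q:ℝ)-1)/(q:ℝ) by field_simp, one_div_div,
    Real.log_div hQ0.ne' hQ1.ne']
  field_simp
  ring

lemma Hent2_flip (u : ℝ) : Hent 2 (1-u) = Hent 2 u := by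
  rw [Hent, Hent, two_cast]
  rw [show (1 - (1-u) : ℝ) = u by ring]
  norm_num
  ring

/-- Values of `ω_{q,c,d}` at special points: `ω(0) = 0`,
`ω(1−1/q) = (1−c/d)·ln q`; if `q ≥ 3` or `d` is even then
`ω(1) = ln(q−1) + (c/d)ρ_{q,d}(1) − (c/d)ln q`; if `q = 2` and `d` is odd then
`ω(1−1/d) = (1−c)H₂(1/d) + (c/d)ln d` and `ω(x) = −∞` on `(1−1/d, 1)` (i.e. the defining
infimum is unbounded below there). -/
theorem omegaF_special_values (q c d : ℕ) (hq : 2 ≤ q) (hc : 1 ≤ c) (hd : 3 ≤ d) :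
    omegaF q c d 0 = 0 ∧
    omegaF q c d (1 - 1 / (q : ℝ)) = (1 - (c : ℝ) / (d : ℝ)) * Real.log (q : ℝ) ∧
    (3 ≤ q ∨ Even d →
      omegaF q c d 1 =
        Real.log ((q : ℝ) - 1) + ((c : ℝ) / (d : ℝ)) * rhoF q d 1 -
          ((c : ℝ) / (d : ℝ)) * Real.log (q : ℝ)) ∧
    (q = 2 ∧ Odd d →
      omegaF q c d (1 - 1 / (d : ℝ)) =
        (1 - (c : ℝ)) * Hent 2 (1 / (d : ℝ)) + ((c : ℝ) / (d : ℝ)) * Real.log (d : ℝ) ∧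
      (∀ x ∈ Set.Ioo (1 - 1 / (d : ℝ)) 1, ∀ M : ℝ, ∃ xh ∈ Set.Ioo (0 : ℝ) 1,
        Hent q x + ((c : ℝ) / (d : ℝ)) * (deltaTwo q d x xh - Real.log (q : ℝ)) < M)) := by
  have h2 := qcast hq
  have hD := dcast hd
  have hQ0 : (0:ℝ) < q := by linarith
  have hD0 : (0:ℝ) < d := by linarith
  have hcd : (0:ℝ) < (c:ℝ) := by exact_mod_cast hc
  refine ⟨?_, ?_, ?_, ?_⟩
  · -- ω(0) = 0
    rw [omegaF, deltaMin_zero hq (by omega), Hent_zero, sub_self, mul_zero, add_zero]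
  · -- ω(1-1/q)
    rw [omegaF, deltaMin_sym hq (by omega), Hent_sym hq]
    ring
  · -- ω(1)
    intro h3
    rw [omegaF, deltaMin_one hq (by omega) h3, Hent_one]
    ring
  · -- q = 2, d odd
    rintro ⟨rfl, hodd⟩
    constructor
    · rw [omegaF, deltaMin_iv hd hodd, Hent2_flip, two_cast]
      have hH : Hent 2 (1/(d:ℝ))
          = (1/(d:ℝ))*Real.log (d:ℝ) - (1-1/(d:ℝ))*Real.log (1-1/(d:ℝ)) := by
        rw [Hent, two_cast, one_div_one_div, one_div ((1:ℝ)-1/(d:ℝ)), Real.log_inv]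
        norm_num
        ring
      rw [hH]
      generalize Real.log (1-1/(d:ℝ)) = b
      generalize Real.log ((d:ℕ):ℝ) = a
      field_simp
      ring
    · intro x hx M
      have htot := deltaTwo_unbdd hd hodd hx
      have h1 : Tendsto (fun p => deltaTwo 2 d x p - Real.log ((2:ℕ):ℝ)) (𝓝[<] (1:ℝ)) atBot := by
        simp only [sub_eq_add_neg]
        exact tendsto_atBot_add_const_right _ _ htot
      have h2' : Tendsto (fun p => ((c:ℝ)/(d:ℝ)) * (deltaTwo 2 d x p - Real.log ((2:ℕ):ℝ)))
          (𝓝[<] (1:ℝ)) atBot := h1.const_mul_atBot (by positivity)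
      have h3' : Tendsto (fun p => Hent 2 x
          + ((c:ℝ)/(d:ℝ)) * (deltaTwo 2 d x p - Real.log ((2:ℕ):ℝ))) (𝓝[<] (1:ℝ)) atBot :=
        tendsto_atBot_add_const_left _ _ h2'
      have hmem : ∀ᶠ p in 𝓝[<] (1:ℝ), p ∈ Set.Ioo (0:ℝ) 1 :=
        Ioo_mem_nhdsLT_of_mem ⟨by norm_num, le_refl _⟩
      obtain ⟨p, hp, hlt⟩ := (hmem.and (h3'.eventually (eventually_lt_atBot M))).exists
      exact ⟨p, hp, hlt⟩
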